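/- Let G be a finite simple graph on n vertices and let y₁ < y₂ be reals with √2 ≤ y₁ and C_G(s) ≠ 0 for all s in the interval (1, y₂²/2]. Let f₁ be a two-distance representation of G in ℝ^{n−1} with distances √2 and y₁, and let f₂ be a two-distance representation of G in ℝ^{n−1} with distances √2 and y₂. If the image of f₂ is contained in a closed ball of radius r, then the image of f₁ is contained in some closed ball of radius r. (In other words, the minimum enclosing ball radius Φ_G(y) of the representation with second distance y is a nondecreasing function of y.) -/

import Mathlib

open scoped Classical RealInnerProductSpace

noncomputable section

/-- A two-distance representation of a simple graph `G` in `ℝ^d`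
(`= EuclideanSpace ℝ (Fin d)`) with distances `a` and `b`, `0 < a ≤ b`: adjacent vertices
are mapped to points at distance `a`, distinct non-adjacent vertices to points at
distance `b`. -/
def IsTwoDistRep {V : Type*} (G : SimpleGraph V) {d : ℕ}
    (f : V → EuclideanSpace ℝ (Fin d)) (a b : ℝ) : Prop :=
  0 < a ∧ a ≤ b ∧
    (∀ u v, G.Adj u v → dist (f u) (f v) = a) ∧
    (∀ u v, u ≠ v → ¬ G.Adj u v → dist (f u) (f v) = b)

/-- The Euclidean representation number `dim^E_2(G)`: the smallest `d` such that `G` has a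
two-distance representation in `ℝ^d`. -/
def dimE2 {V : Type*} (G : SimpleGraph V) : ℕ :=
  sInf {d | ∃ (f : V → EuclideanSpace ℝ (Fin d)) (a b : ℝ), IsTwoDistRep G f a b}

/-- The spherical representation number `dim^S_2(G)`: the smallest `d` such that `G` has a
two-distance representation in `ℝ^d` whose image lies on a sphere. -/
def dimS2 {V : Type*} (G : SimpleGraph V) : ℕ :=
  sInf {d | ∃ (f : V → EuclideanSpace ℝ (Fin d)) (a b : ℝ)
      (c : EuclideanSpace ℝ (Fin d)) (r : ℝ),
    IsTwoDistRep G f a b ∧ ∀ v, dist c (f v) = r}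

/-- The J-spherical representation number `dim^J_2(G)`: the smallest `d` such that `G` has a
two-distance representation in `ℝ^d` with distances `√2` and `b` (`√2 ≤ b`) whose image lies
on the unit sphere centered at the origin. -/
def dimJ2 {V : Type*} (G : SimpleGraph V) : ℕ :=
  sInf {d | ∃ (f : V → EuclideanSpace ℝ (Fin d)) (b : ℝ),
    IsTwoDistRep G f (Real.sqrt 2) b ∧ ∀ v, ‖f v‖ = 1}

/-- `β_*(G)`: the second distance of the (unique) J-spherical representation of `G` in
dimension `dimJ2 G`. -/
def betaStar {V : Type*} (G : SimpleGraph V) : ℝ :=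
  sInf {b : ℝ | ∃ f : V → EuclideanSpace ℝ (Fin (dimJ2 G)),
    IsTwoDistRep G f (Real.sqrt 2) b ∧ ∀ v, ‖f v‖ = 1}

/-- The Cayley–Menger matrix of a graph, with entries in `ℝ[X]`: the extra index `none`
gives the row and column of `1`s (with `0` in the corner), and for distinct vertices `u, v`
the entry is `1` if they are adjacent and `X` (the variable `t`) otherwise. -/
def cmMatrix {V : Type*} [Fintype V] (G : SimpleGraph V) :
    Matrix (Option V) (Option V) (Polynomial ℝ) := fun i j =>
  match i, j with
  | none, none => 0
  | none, some _ => 1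
  | some _, none => 1
  | some u, some v => if u = v then 0 else if G.Adj u v then 1 else Polynomial.X

/-- The Cayley–Menger polynomial `C_G(t)`. -/
def CG {V : Type*} [Fintype V] (G : SimpleGraph V) : Polynomial ℝ :=
  (cmMatrix G).det

/-- The matrix defining `M_G`. -/
def mMatrix {V : Type*} [Fintype V] (G : SimpleGraph V) :
    Matrix V V (Polynomial ℝ) := fun u v =>
  if u = v then 0 else if G.Adj u v then 1 else Polynomial.X

/-- The polynomial `M_G(t)`. -/
def MG {V : Type*} [Fintype V] (G : SimpleGraph V) : Polynomial ℝ :=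
  (mMatrix G).det

/-- `C_G` has a root greater than `1` (i.e. `τ₁(G) < ∞`). -/
def HasTau {V : Type*} [Fintype V] (G : SimpleGraph V) : Prop :=
  ∃ t : ℝ, 1 < t ∧ (CG G).eval t = 0

/-- `τ₁(G)`: the smallest root of `C_G` greater than `1` (junk value if none exists). -/
def tau1 {V : Type*} [Fintype V] (G : SimpleGraph V) : ℝ :=
  sInf {t : ℝ | 1 < t ∧ (CG G).eval t = 0}

/-- `μ(G)`: the multiplicity of `τ₁(G)` as a root of `C_G`, and `0` if `C_G` has no
root greater than `1`. -/
def muG {V : Type*} [Fintype V] (G : SimpleGraph V) : ℕ :=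
  if HasTau G then (CG G).rootMultiplicity (tau1 G) else 0

/-- `F_G = -M_G / (2 C_G)`, viewed as a rational function of `t`. -/
def FG {V : Type*} [Fintype V] (G : SimpleGraph V) : RatFunc ℝ :=
  RatFunc.mk (-(MG G)) (2 * CG G)

/-- The rational function `F_G` has no pole at `τ₁(G)`: the denominator of the reduced
fraction does not vanish there. -/
def NoPoleAtTau {V : Type*} [Fintype V] (G : SimpleGraph V) : Prop :=
  (FG G).denom.eval (tau1 G) ≠ 0

/-- The value `F_G(τ₁(G))` of the rational function `F_G` at `τ₁(G)`. -/
def FGtau {V : Type*} [Fintype V] (G : SimpleGraph V) : ℝ :=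
  (FG G).eval (RingHom.id ℝ) (tau1 G)

/-- The circumradius `R(G)` is finite: `τ₁(G) < ∞` and `F_G` has no pole at `τ₁(G)`.
(Then `R(G) = √(F_G(τ₁(G)))`.) -/
def RGfin {V : Type*} [Fintype V] (G : SimpleGraph V) : Prop :=
  HasTau G ∧ NoPoleAtTau G

/-- The value of `F_G` at a point `t` which is not a root of `C_G`. -/
def FGval {V : Type*} [Fintype V] (G : SimpleGraph V) (t : ℝ) : ℝ :=
  -((MG G).eval t) / (2 * (CG G).eval t)

/-- `dim^S_2(G, R₀)`: the smallest `d` such that `G` has a two-distance representation in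
`ℝ^d` with distances `1` and `b` whose image lies on a sphere of radius at most `R₀`. -/
def dimS2R {V : Type*} (G : SimpleGraph V) (R₀ : ℝ) : ℕ :=
  sInf {d | ∃ (f : V → EuclideanSpace ℝ (Fin d)) (b : ℝ)
      (c : EuclideanSpace ℝ (Fin d)) (r : ℝ),
    IsTwoDistRep G f 1 b ∧ r ≤ R₀ ∧ ∀ v, dist c (f v) = r}

/-- The join of two graphs: their disjoint union together with all edges between the parts. -/
def graphJoin {V₁ V₂ : Type} (G₁ : SimpleGraph V₁) (G₂ : SimpleGraph V₂) :
    SimpleGraph (V₁ ⊕ V₂) :=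
  SimpleGraph.fromRel fun x y =>
    (∃ a b, x = Sum.inl a ∧ y = Sum.inl b ∧ G₁.Adj a b) ∨
    (∃ a b, x = Sum.inr a ∧ y = Sum.inr b ∧ G₂.Adj a b) ∨
    (∃ a b, x = Sum.inl a ∧ y = Sum.inr b)

/-- The join of a family of graphs: two vertices are adjacent iff they lie in different
summands or are adjacent within their common summand. -/
def familyJoin {ι : Type*} {V : ι → Type*} (G : ∀ i, SimpleGraph (V i)) :
    SimpleGraph (Σ i, V i) :=
  SimpleGraph.fromRel fun x y =>
    x.1 ≠ y.1 ∨ ∃ h : x.1 = y.1, (G y.1).Adj (h ▸ x.2) y.2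

/-- A graph is join-indecomposable if it is not isomorphic to a join of two graphs,
each having at least one vertex. -/
def JoinIndecomposable {V : Type} (G : SimpleGraph V) : Prop :=
  ¬ ∃ (V₁ V₂ : Type) (G₁ : SimpleGraph V₁) (G₂ : SimpleGraph V₂),
      Nonempty V₁ ∧ Nonempty V₂ ∧ Nonempty (G ≃g graphJoin G₁ G₂)

/-- `S` is of Type I in the linear subspace `L`: all points have norm `1`,
`|S| = dim L + 1`, the affine hull of `S` has dimension `dim L`, and the origin lies in the
relative interior of the convex hull of `S`. -/
def TypeI {d : ℕ} (L : Submodule ℝ (EuclideanSpace ℝ (Fin d)))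
    (S : Finset (EuclideanSpace ℝ (Fin d))) : Prop :=
  (↑S : Set (EuclideanSpace ℝ (Fin d))) ⊆ (L : Set (EuclideanSpace ℝ (Fin d))) ∧
  (∀ p ∈ S, ‖p‖ = 1) ∧
  S.card = Module.finrank ℝ L + 1 ∧
  Module.finrank ℝ (affineSpan ℝ (↑S : Set (EuclideanSpace ℝ (Fin d)))).direction =
    Module.finrank ℝ L ∧
  (0 : EuclideanSpace ℝ (Fin d)) ∈
    intrinsicInterior ℝ (convexHull ℝ (↑S : Set (EuclideanSpace ℝ (Fin d))))

/-- `S` is of Type II in the linear subspace `L`: all points have norm `1`,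
`|S| = dim L`, the affine hull of `S` has dimension `dim L - 1`, and the origin does not lie
in the affine hull of `S`. -/
def TypeII {d : ℕ} (L : Submodule ℝ (EuclideanSpace ℝ (Fin d)))
    (S : Finset (EuclideanSpace ℝ (Fin d))) : Prop :=
  (↑S : Set (EuclideanSpace ℝ (Fin d))) ⊆ (L : Set (EuclideanSpace ℝ (Fin d))) ∧
  (∀ p ∈ S, ‖p‖ = 1) ∧
  S.card = Module.finrank ℝ L ∧
  Module.finrank ℝ (affineSpan ℝ (↑S : Set (EuclideanSpace ℝ (Fin d)))).direction =
    Module.finrank ℝ L - 1 ∧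
  (0 : EuclideanSpace ℝ (Fin d)) ∉ affineSpan ℝ (↑S : Set (EuclideanSpace ℝ (Fin d)))

/-- A J-spherical two-distance (JSTD) set with second distance `b`: a finite set on the unit
sphere centered at the origin whose pairwise distances take exactly the two values `√2` and
`b`, where `b > √2`. -/
def IsJSTD {d : ℕ} (S : Finset (EuclideanSpace ℝ (Fin d))) (b : ℝ) : Prop :=
  (∀ p ∈ S, ‖p‖ = 1) ∧ Real.sqrt 2 < b ∧
  (∀ p ∈ S, ∀ q ∈ S, p ≠ q → dist p q = Real.sqrt 2 ∨ dist p q = b) ∧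
  (∃ p ∈ S, ∃ q ∈ S, dist p q = Real.sqrt 2) ∧
  (∃ p ∈ S, ∃ q ∈ S, dist p q = b)

private lemma kb_sum_identity {ι : Type*} {E : Type*} [NormedAddCommGroup E]
    [InnerProductSpace ℝ E] (s : Finset ι) (w : ι → ℝ) (u : ι → E) :
    ∑ p ∈ s, ∑ q ∈ s, w p * w q * ‖u p - u q‖ ^ 2 =
      2 * (∑ p ∈ s, w p) * (∑ p ∈ s, w p * ‖u p‖ ^ 2) -
        2 * ‖∑ p ∈ s, w p • u p‖ ^ 2 := by
  have hinner : ⟪∑ p ∈ s, w p • u p, ∑ q ∈ s, w q • u q⟫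
      = ∑ p ∈ s, ∑ q ∈ s, w p * w q * ⟪u p, u q⟫ := by
    rw [sum_inner]
    refine Finset.sum_congr rfl fun p _ => ?_
    rw [inner_sum]
    refine Finset.sum_congr rfl fun q _ => ?_
    rw [real_inner_smul_left, real_inner_smul_right]; ring
  have hnorm : ‖∑ p ∈ s, w p • u p‖ ^ 2
      = ∑ p ∈ s, ∑ q ∈ s, w p * w q * ⟪u p, u q⟫ := by
    rw [← real_inner_self_eq_norm_sq]; exact hinner
  have e1 : (∑ p ∈ s, w p * ‖u p‖ ^ 2) * (∑ q ∈ s, w q)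
      = ∑ p ∈ s, ∑ q ∈ s, w p * ‖u p‖ ^ 2 * w q := Finset.sum_mul_sum _ _ _ _
  have e2 : (∑ p ∈ s, w p) * (∑ q ∈ s, w q * ‖u q‖ ^ 2)
      = ∑ p ∈ s, ∑ q ∈ s, w p * (w q * ‖u q‖ ^ 2) := Finset.sum_mul_sum _ _ _ _
  calc ∑ p ∈ s, ∑ q ∈ s, w p * w q * ‖u p - u q‖ ^ 2
      = ∑ p ∈ s, ∑ q ∈ s, (w p * ‖u p‖ ^ 2 * w q + w p * (w q * ‖u q‖ ^ 2)
          - 2 * (w p * w q * ⟪u p, u q⟫)) := by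
        refine Finset.sum_congr rfl fun p _ => Finset.sum_congr rfl fun q _ => ?_
        rw [norm_sub_sq_real]; ring
    _ = (∑ p ∈ s, ∑ q ∈ s, w p * ‖u p‖ ^ 2 * w q)
          + (∑ p ∈ s, ∑ q ∈ s, w p * (w q * ‖u q‖ ^ 2))
          - 2 * ∑ p ∈ s, ∑ q ∈ s, w p * w q * ⟪u p, u q⟫ := by
        simp only [Finset.sum_sub_distrib, Finset.sum_add_distrib, Finset.mul_sum]
    _ = 2 * (∑ p ∈ s, w p) * (∑ p ∈ s, w p * ‖u p‖ ^ 2)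
          - 2 * ‖∑ p ∈ s, w p • u p‖ ^ 2 := by
        rw [hnorm, ← e1, ← e2]; ring

private lemma kirszbraun_finset {E : Type*} [NormedAddCommGroup E] [InnerProductSpace ℝ E]
    [FiniteDimensional ℝ E] {ι : Type*} [Fintype ι] [Nonempty ι] (x y : ι → E)
    (hxy : ∀ i j, dist (y i) (y j) ≤ dist (x i) (x j)) (c : E) :
    ∃ c' : E, ∀ i, dist c' (y i) ≤ dist c (x i) := by
  classical
  set r : ι → ℝ := fun i => dist c (x i) with hr
  have hne : (Finset.univ : Finset ι).Nonempty := Finset.univ_nonempty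
  set g : E → ℝ := fun z => Finset.univ.sup' hne fun i => ‖z - y i‖ ^ 2 - r i ^ 2 with hg
  have hcont : Continuous g := by
    apply Continuous.finset_sup'_apply hne
    intro i _
    exact ((continuous_id.sub continuous_const).norm.pow 2).sub continuous_const
  obtain ⟨z₀, hz₀⟩ : ∃ z₀ : E, ∀ z, g z₀ ≤ g z := by
    set i₀ := Classical.arbitrary ι with hi₀
    apply hcont.exists_forall_le' (y i₀)
    set R : ℝ := Real.sqrt (|g (y i₀)| + r i₀ ^ 2) with hR
    rw [Filter.eventually_iff, Filter.mem_cocompact]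
    refine ⟨Metric.closedBall (y i₀) R, isCompact_closedBall _ _, fun z hz => ?_⟩
    simp only [Set.mem_compl_iff, Metric.mem_closedBall, not_le] at hz
    have hR0 : 0 ≤ R := Real.sqrt_nonneg _
    have hzn : R < ‖z - y i₀‖ := by rwa [dist_eq_norm] at hz
    have hRz : R ^ 2 < ‖z - y i₀‖ ^ 2 := by nlinarith
    have hR2 : R ^ 2 = |g (y i₀)| + r i₀ ^ 2 := Real.sq_sqrt (by positivity)
    have hle : ‖z - y i₀‖ ^ 2 - r i₀ ^ 2 ≤ g z :=
      Finset.le_sup' (fun i => ‖z - y i‖ ^ 2 - r i ^ 2) (Finset.mem_univ i₀)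
    have habs : g (y i₀) ≤ |g (y i₀)| := le_abs_self _
    simp only [Set.mem_setOf_eq]
    linarith
  by_cases hμ : g z₀ ≤ 0
  · refine ⟨z₀, fun i => ?_⟩
    have hle : ‖z₀ - y i‖ ^ 2 - r i ^ 2 ≤ g z₀ :=
      Finset.le_sup' (fun i => ‖z₀ - y i‖ ^ 2 - r i ^ 2) (Finset.mem_univ i)
    have h2 : ‖z₀ - y i‖ ^ 2 ≤ r i ^ 2 := by linarith
    have h3 := Real.sqrt_le_sqrt h2
    rw [Real.sqrt_sq (norm_nonneg _), Real.sqrt_sq dist_nonneg] at h3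
    rw [dist_eq_norm]
    exact h3
  push_neg at hμ
  exfalso
  set μ := g z₀ with hμdef
  set t : Finset ι := Finset.univ.filter fun i => ‖z₀ - y i‖ ^ 2 - r i ^ 2 = μ with ht
  have htne : t.Nonempty := by
    obtain ⟨i, _, hi⟩ := Finset.exists_mem_eq_sup' hne fun i => ‖z₀ - y i‖ ^ 2 - r i ^ 2
    exact ⟨i, Finset.mem_filter.2 ⟨Finset.mem_univ i, hi.symm⟩⟩
  have hact' : ∀ i ∈ t, ‖z₀ - y i‖ ^ 2 - r i ^ 2 = μ := fun i hi => (Finset.mem_filter.1 hi).2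
  -- z₀ is in the convex hull of the active points
  have hzconv : z₀ ∈ convexHull ℝ (↑(t.image y) : Set E) := by
    by_contra hzc
    obtain ⟨φ, u, hu1, hu2⟩ := geometric_hahn_banach_point_closed
      (convex_convexHull ℝ _) ((t.image y).finite_toSet.isClosed_convexHull (𝕜 := ℝ)) hzc
    set w := (InnerProductSpace.toDual ℝ E).symm φ with hw
    have hφ : ∀ v : E, ⟪w, v⟫ = φ v := fun v => InnerProductSpace.toDual_symm_apply
    set δ := u - φ z₀ with hδdef
    have hδ : 0 < δ := sub_pos.2 hu1
    have hwt : ∀ i ∈ t, δ ≤ ⟪w, y i - z₀⟫ := by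
      intro i hi
      have hmem : y i ∈ convexHull ℝ (↑(t.image y) : Set E) :=
        subset_convexHull ℝ _ (by exact_mod_cast Finset.mem_image_of_mem y hi)
      have h2 := hu2 _ hmem
      rw [inner_sub_right, hφ, hφ]
      linarith
    set N := Finset.univ.sup' hne fun i => ‖z₀ - y i‖ with hN
    have hN0 : 0 ≤ N :=
      le_trans (norm_nonneg _)
        (Finset.le_sup' (fun i => ‖z₀ - y i‖) (Finset.mem_univ (Classical.arbitrary ι)))
    set B := 2 * ‖w‖ * N + ‖w‖ ^ 2 + 1 with hB
    have hB0 : 0 < B := by positivity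
    set m := Finset.univ.sup' hne
      (fun i => if i ∈ t then μ - 1 else ‖z₀ - y i‖ ^ 2 - r i ^ 2) with hm
    have hmμ : m < μ := by
      rw [hm, Finset.sup'_lt_iff]
      intro i _
      by_cases hit : i ∈ t
      · simp only [hit, if_true]; linarith
      · simp only [hit, if_false]
        refine lt_of_le_of_ne ?_ ?_
        · exact Finset.le_sup' (fun i => ‖z₀ - y i‖ ^ 2 - r i ^ 2) (Finset.mem_univ i)
        · intro hcon
          exact hit (Finset.mem_filter.2 ⟨Finset.mem_univ i, hcon⟩)
    have hmge : ∀ i, i ∉ t → ‖z₀ - y i‖ ^ 2 - r i ^ 2 ≤ m := by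
      intro i hit
      have h1 := Finset.le_sup'
        (fun i => if i ∈ t then μ - 1 else ‖z₀ - y i‖ ^ 2 - r i ^ 2) (Finset.mem_univ i)
      rw [if_neg hit] at h1
      exact h1
    set ε := min 1 (min (δ / (‖w‖ ^ 2 + 1)) ((μ - m) / B)) with hε
    have hε0 : 0 < ε := by
      refine lt_min one_pos (lt_min (by positivity) (div_pos (by linarith) hB0))
    have hε1 : ε ≤ 1 := min_le_left _ _
    have hεδ : ε * (‖w‖ ^ 2 + 1) ≤ δ := by
      have h1 : ε ≤ δ / (‖w‖ ^ 2 + 1) := le_trans (min_le_right _ _) (min_le_left _ _)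
      exact (le_div_iff₀ (by positivity)).1 h1
    have hεB : ε * B ≤ μ - m := by
      have h1 : ε ≤ (μ - m) / B := le_trans (min_le_right _ _) (min_le_right _ _)
      exact (le_div_iff₀ hB0).1 h1
    have hlt : g (z₀ + ε • w) < μ := by
      rw [hg]
      rw [Finset.sup'_lt_iff]
      intro i _
      have hexp : ‖z₀ + ε • w - y i‖ ^ 2
          = ‖z₀ - y i‖ ^ 2 + 2 * (ε * ⟪z₀ - y i, w⟫) + ε ^ 2 * ‖w‖ ^ 2 := by
        have h1 : z₀ + ε • w - y i = (z₀ - y i) + ε • w := by abel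
        rw [h1, norm_add_sq_real, real_inner_smul_right, norm_smul,
          Real.norm_eq_abs, abs_of_pos hε0]
        ring
      by_cases hit : i ∈ t
      · have hact : ‖z₀ - y i‖ ^ 2 - r i ^ 2 = μ := hact' i hit
        have hip : ⟪z₀ - y i, w⟫ ≤ -δ := by
          have h1 := hwt i hit
          have hcomm : ⟪z₀ - y i, w⟫ = -⟪w, y i - z₀⟫ := by
            rw [real_inner_comm, ← neg_sub (y i) z₀, inner_neg_right]
          rw [hcomm]; linarith
        rw [hexp]
        nlinarith [mul_le_mul_of_nonneg_left hip hε0.le,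
          mul_le_mul_of_nonneg_left hεδ hε0.le, sq_nonneg ε, mul_pos hε0 hδ]
      · have hin : ‖z₀ - y i‖ ^ 2 - r i ^ 2 ≤ m := hmge i hit
        have hip : ⟪z₀ - y i, w⟫ ≤ N * ‖w‖ := by
          calc ⟪z₀ - y i, w⟫ ≤ ‖z₀ - y i‖ * ‖w‖ := real_inner_le_norm _ _
            _ ≤ N * ‖w‖ := by
              have h2 : ‖z₀ - y i‖ ≤ N :=
                Finset.le_sup' (fun i => ‖z₀ - y i‖) (Finset.mem_univ i)
              exact mul_le_mul_of_nonneg_right h2 (norm_nonneg _)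
        have hsq : ε ^ 2 * ‖w‖ ^ 2 ≤ ε * ‖w‖ ^ 2 := by
          nlinarith [mul_nonneg (mul_nonneg hε0.le (sub_nonneg.2 hε1)) (sq_nonneg ‖w‖)]
        rw [hB] at hεB
        rw [hexp]
        linarith [mul_le_mul_of_nonneg_left hip hε0.le, hsq, hεB, hin, hε0]
    exact absurd (hz₀ (z₀ + ε • w)) (not_le.2 hlt)
  -- extract convex weights and derive the contradiction μ ≤ 0
  rw [Finset.convexHull_eq] at hzconv
  obtain ⟨W, hW0, hW1, hWc⟩ := hzconv
  rw [Finset.centerMass_eq_of_sum_1 _ _ hW1] at hWc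
  simp only [id] at hWc
  set s' := t.image y with hs'
  set v : E → ι := fun p => if h : ∃ i, i ∈ t ∧ y i = p then h.choose
    else Classical.arbitrary ι with hv
  have hvp : ∀ p ∈ s', v p ∈ t ∧ y (v p) = p := by
    intro p hp
    have hex : ∃ i, i ∈ t ∧ y i = p := by
      obtain ⟨i, hi, hyi⟩ := Finset.mem_image.1 hp
      exact ⟨i, hi, hyi⟩
    simp only [hv, dif_pos hex]
    exact hex.choose_spec
  have idA := kb_sum_identity s' W (fun p => p - z₀)
  have idB := kb_sum_identity s' W (fun p => x (v p) - c)
  have hzero : ∑ p ∈ s', W p • (p - z₀) = 0 := by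
    simp only [smul_sub]
    rw [Finset.sum_sub_distrib, hWc, ← Finset.sum_smul, hW1, one_smul, sub_self]
  have hnr : ∀ p, ‖x (v p) - c‖ = r (v p) := fun p => by
    rw [← dist_eq_norm, dist_comm]
  have hcmp : ∑ p ∈ s', ∑ q ∈ s', W p * W q * ‖p - z₀ - (q - z₀)‖ ^ 2
      ≤ ∑ p ∈ s', ∑ q ∈ s', W p * W q * ‖x (v p) - c - (x (v q) - c)‖ ^ 2 := by
    refine Finset.sum_le_sum fun p hp => Finset.sum_le_sum fun q hq => ?_
    have hd : ‖p - z₀ - (q - z₀)‖ ≤ ‖x (v p) - c - (x (v q) - c)‖ := by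
      have e1 : p - z₀ - (q - z₀) = p - q := by abel
      have e2 : x (v p) - c - (x (v q) - c) = x (v p) - x (v q) := by abel
      calc ‖p - z₀ - (q - z₀)‖ = dist p q := by rw [e1, dist_eq_norm]
        _ = dist (y (v p)) (y (v q)) := by rw [(hvp p hp).2, (hvp q hq).2]
        _ ≤ dist (x (v p)) (x (v q)) := hxy _ _
        _ = ‖x (v p) - c - (x (v q) - c)‖ := by rw [e2, dist_eq_norm]
    exact mul_le_mul_of_nonneg_left (pow_le_pow_left₀ (norm_nonneg _) hd 2)
      (mul_nonneg (hW0 p hp) (hW0 q hq))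
  have hA : ∑ p ∈ s', ∑ q ∈ s', W p * W q * ‖p - z₀ - (q - z₀)‖ ^ 2
      = 2 * (μ + ∑ p ∈ s', W p * r (v p) ^ 2) := by
    rw [idA, hzero, hW1, norm_zero]
    have h1 : ∑ p ∈ s', W p * ‖p - z₀‖ ^ 2
        = ∑ p ∈ s', (μ * W p + W p * r (v p) ^ 2) := by
      refine Finset.sum_congr rfl fun p hp => ?_
      have h2 := hact' (v p) (hvp p hp).1
      have h3 : ‖p - z₀‖ = ‖z₀ - y (v p)‖ := by rw [(hvp p hp).2, norm_sub_rev]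
      rw [h3, ← h2]
      ring
    rw [h1, Finset.sum_add_distrib, ← Finset.mul_sum, hW1]
    ring
  have hB : ∑ p ∈ s', ∑ q ∈ s', W p * W q * ‖x (v p) - c - (x (v q) - c)‖ ^ 2
      ≤ 2 * ∑ p ∈ s', W p * r (v p) ^ 2 := by
    rw [idB, hW1]
    have h1 : ∑ p ∈ s', W p * ‖x (v p) - c‖ ^ 2 = ∑ p ∈ s', W p * r (v p) ^ 2 :=
      Finset.sum_congr rfl fun p _ => by rw [hnr]
    rw [h1]
    have h2 := sq_nonneg ‖∑ p ∈ s', W p • (x (v p) - c)‖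
    linarith
  have hfinal : 2 * (μ + ∑ p ∈ s', W p * r (v p) ^ 2)
      ≤ 2 * ∑ p ∈ s', W p * r (v p) ^ 2 := hA ▸ hcmp.trans hB
  linarith

/-- The minimum enclosing ball radius of the representation with second
distance `y` is nondecreasing in `y`. -/
theorem enclosing_radius_mono (n : ℕ) (G : SimpleGraph (Fin n)) (y₁ y₂ : ℝ)
    (hy₁ : Real.sqrt 2 ≤ y₁) (hy : y₁ < y₂)
    (hC : ∀ s : ℝ, 1 < s → s ≤ y₂ ^ 2 / 2 → (CG G).eval s ≠ 0)
    (f₁ f₂ : Fin n → EuclideanSpace ℝ (Fin (n - 1)))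
    (hf₁ : IsTwoDistRep G f₁ (Real.sqrt 2) y₁)
    (hf₂ : IsTwoDistRep G f₂ (Real.sqrt 2) y₂)
    (c : EuclideanSpace ℝ (Fin (n - 1))) (r : ℝ)
    (h : ∀ v, f₂ v ∈ Metric.closedBall c r) :
    ∃ c' : EuclideanSpace ℝ (Fin (n - 1)), ∀ v, f₁ v ∈ Metric.closedBall c' r := by
  rcases Nat.eq_zero_or_pos n with hn | hn
  · exact ⟨c, fun v => absurd v.isLt (by omega)⟩
  · haveI : Nonempty (Fin n) := ⟨⟨0, hn⟩⟩
    have key : ∀ u v, dist (f₁ u) (f₁ v) ≤ dist (f₂ u) (f₂ v) := by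
      intro u v
      by_cases huv : u = v
      · subst huv; simp
      by_cases hadj : G.Adj u v
      · rw [hf₁.2.2.1 u v hadj, hf₂.2.2.1 u v hadj]
      · rw [hf₁.2.2.2 u v huv hadj, hf₂.2.2.2 u v huv hadj]
        exact hy.le
    obtain ⟨c', hc'⟩ := kirszbraun_finset f₂ f₁ key c
    refine ⟨c', fun v => Metric.mem_closedBall.2 ?_⟩
    have h1 : dist (f₂ v) c ≤ r := Metric.mem_closedBall.1 (h v)
    calc dist (f₁ v) c' = dist c' (f₁ v) := dist_comm _ _
      _ ≤ dist c (f₂ v) := hc' v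
      _ = dist (f₂ v) c := dist_comm _ _
      _ ≤ r := h1
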